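/- The mapping T : ℝ → ℝ given by Tx = −x+1 for x < 0 and Tx = x + e^{−x} for x ≥ 0 satisfies, for all x, y ∈ ℝ, the inequality |Tx − Ty| ≤ (1/2)(|x − Ty| + |Tx − y|), and is non-expansive; hence T is firm non-expansive (with q = r = s = 0 and t = 1/2). -/
import Mathlib


open Filter Topology

def IsWeakMetric {X : Type*} (δ : X → X → ℝ) : Prop :=
  (∀ x, δ x x = 0) ∧ (∀ x y, 0 ≤ δ x y) ∧ (∀ x y z, δ x z ≤ δ x y + δ y z)

def IsNonexpansive {X : Type*} (δ : X → X → ℝ) (T : X → X) : Prop :=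
  ∀ x y, δ (T x) (T y) ≤ δ x y

def IsFirm {X : Type*} (δ : X → X → ℝ) (T : X → X) : Prop :=
  ∃ q r s t : X → X → ℝ,
    (∀ x y, 0 ≤ q x y) ∧ (∀ x y, 0 ≤ r x y) ∧ (∀ x y, 0 ≤ s x y) ∧ (∀ x y, 0 ≤ t x y) ∧
    (∃ α > 0, ∀ x y, α ≤ t x y) ∧
    (∀ x y, q x y + r x y + s x y + 2 * t x y ≤ 1) ∧
    (∀ x y, δ (T x) (T y) ≤ q x y * δ x y + r x y * δ x (T x) + s x y * δ y (T y)
      + t x y * (δ x (T y) + δ (T x) y))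

set_option maxHeartbeats 1000000 in
theorem stmt8 (T : ℝ → ℝ)
    (hT : ∀ x : ℝ, T x = if x < 0 then -x + 1 else x + Real.exp (-x)) :
    (∀ x y : ℝ, |T x - T y| ≤ (1 / 2) * (|x - T y| + |T x - y|)) ∧
    IsNonexpansive (fun x y : ℝ => |x - y|) T ∧
    IsFirm (fun x y : ℝ => |x - y|) T := by
  have key : ∀ x y : ℝ, |T x - T y| ≤ (1 / 2) * (|x - T y| + |T x - y|) := by
    intro x y
    rw [hT x, hT y]
    have hex : (0:ℝ) < Real.exp (-x) := Real.exp_pos _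
    have hey : (0:ℝ) < Real.exp (-y) := Real.exp_pos _
    have h1 : Real.exp (-y) ≥ Real.exp (-x) * (1 + x - y) := by
      calc Real.exp (-x) * (1 + x - y) ≤ Real.exp (-x) * Real.exp (x - y) := by
            nlinarith [Real.add_one_le_exp (x - y)]
        _ = Real.exp (-y) := by rw [← Real.exp_add]; ring_nf
    have h2 : Real.exp (-x) ≥ Real.exp (-y) * (1 + y - x) := by
      calc Real.exp (-y) * (1 + y - x) ≤ Real.exp (-y) * Real.exp (y - x) := by
            nlinarith [Real.add_one_le_exp (y - x)]
        _ = Real.exp (-x) := by rw [← Real.exp_add]; ring_nf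
    split_ifs with hx hy hy
    · rcases abs_cases ((-x + 1) - (-y + 1)) with ⟨e1,_⟩|⟨e1,_⟩ <;>
      rcases abs_cases (x - (-y + 1)) with ⟨e2,_⟩|⟨e2,_⟩ <;>
      rcases abs_cases ((-x + 1) - y) with ⟨e3,_⟩|⟨e3,_⟩ <;>
      rw [e1, e2, e3] <;> linarith
    · push_neg at hy
      have hby : Real.exp (-y) ≤ 1 := by
        rw [Real.exp_le_one_iff]; linarith
      have hly : Real.exp (-y) ≥ 1 - y := by nlinarith [Real.add_one_le_exp (-y)]
      rcases abs_cases ((-x + 1) - (y + Real.exp (-y))) with ⟨e1,s1⟩|⟨e1,s1⟩ <;>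
      rcases abs_cases (x - (y + Real.exp (-y))) with ⟨e2,s2⟩|⟨e2,s2⟩ <;>
      rcases abs_cases ((-x + 1) - y) with ⟨e3,s3⟩|⟨e3,s3⟩ <;>
      rw [e1, e2, e3] <;> nlinarith [mul_pos hey hey]
    · push_neg at hx
      have hbx : Real.exp (-x) ≤ 1 := by
        rw [Real.exp_le_one_iff]; linarith
      have hlx : Real.exp (-x) ≥ 1 - x := by nlinarith [Real.add_one_le_exp (-x)]
      rcases abs_cases ((x + Real.exp (-x)) - (-y + 1)) with ⟨e1,s1⟩|⟨e1,s1⟩ <;>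
      rcases abs_cases (x - (-y + 1)) with ⟨e2,s2⟩|⟨e2,s2⟩ <;>
      rcases abs_cases ((x + Real.exp (-x)) - y) with ⟨e3,s3⟩|⟨e3,s3⟩ <;>
      rw [e1, e2, e3] <;> nlinarith [mul_pos hex hex]
    · push_neg at hx hy
      have hbx : Real.exp (-x) ≤ 1 := by rw [Real.exp_le_one_iff]; linarith
      have hby : Real.exp (-y) ≤ 1 := by rw [Real.exp_le_one_iff]; linarith
      rcases abs_cases ((x + Real.exp (-x)) - (y + Real.exp (-y))) with ⟨e1,s1⟩|⟨e1,s1⟩ <;>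
      rcases abs_cases (x - (y + Real.exp (-y))) with ⟨e2,s2⟩|⟨e2,s2⟩ <;>
      rcases abs_cases ((x + Real.exp (-x)) - y) with ⟨e3,s3⟩|⟨e3,s3⟩ <;>
      rw [e1, e2, e3] <;>
      nlinarith [mul_pos hex hey, mul_nonneg hex.le hx, mul_nonneg hey.le hy,
        mul_nonneg (mul_nonneg hex.le hex.le) hy, mul_nonneg (mul_nonneg hey.le hey.le) hx]
  have nonexp : ∀ x y : ℝ, |T x - T y| ≤ |x - y| := by
    intro x y
    rw [hT x, hT y]
    have hex : (0:ℝ) < Real.exp (-x) := Real.exp_pos _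
    have hey : (0:ℝ) < Real.exp (-y) := Real.exp_pos _
    have h1 : Real.exp (-y) ≥ Real.exp (-x) * (1 + x - y) := by
      calc Real.exp (-x) * (1 + x - y) ≤ Real.exp (-x) * Real.exp (x - y) := by
            nlinarith [Real.add_one_le_exp (x - y)]
        _ = Real.exp (-y) := by rw [← Real.exp_add]; ring_nf
    have h2 : Real.exp (-x) ≥ Real.exp (-y) * (1 + y - x) := by
      calc Real.exp (-y) * (1 + y - x) ≤ Real.exp (-y) * Real.exp (y - x) := by
            nlinarith [Real.add_one_le_exp (y - x)]
        _ = Real.exp (-x) := by rw [← Real.exp_add]; ring_nf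
    split_ifs with hx hy hy
    · rcases abs_cases ((-x + 1) - (-y + 1)) with ⟨e1,_⟩|⟨e1,_⟩ <;>
      rcases abs_cases (x - y) with ⟨e2,_⟩|⟨e2,_⟩ <;>
      rw [e1, e2] <;> linarith
    · push_neg at hy
      have hby : Real.exp (-y) ≤ 1 := by rw [Real.exp_le_one_iff]; linarith
      have hly : Real.exp (-y) ≥ 1 - y := by nlinarith [Real.add_one_le_exp (-y)]
      rcases abs_cases ((-x + 1) - (y + Real.exp (-y))) with ⟨e1,_⟩|⟨e1,_⟩ <;>
      rcases abs_cases (x - y) with ⟨e2,_⟩|⟨e2,_⟩ <;>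
      rw [e1, e2] <;> nlinarith
    · push_neg at hx
      have hbx : Real.exp (-x) ≤ 1 := by rw [Real.exp_le_one_iff]; linarith
      have hlx : Real.exp (-x) ≥ 1 - x := by nlinarith [Real.add_one_le_exp (-x)]
      rcases abs_cases ((x + Real.exp (-x)) - (-y + 1)) with ⟨e1,_⟩|⟨e1,_⟩ <;>
      rcases abs_cases (x - y) with ⟨e2,_⟩|⟨e2,_⟩ <;>
      rw [e1, e2] <;> nlinarith
    · push_neg at hx hy
      have hbx : Real.exp (-x) ≤ 1 := by rw [Real.exp_le_one_iff]; linarith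
      have hby : Real.exp (-y) ≤ 1 := by rw [Real.exp_le_one_iff]; linarith
      rcases abs_cases ((x + Real.exp (-x)) - (y + Real.exp (-y))) with ⟨e1,_⟩|⟨e1,_⟩ <;>
      rcases abs_cases (x - y) with ⟨e2,_⟩|⟨e2,_⟩ <;>
      rw [e1, e2] <;> nlinarith [mul_nonneg hex.le hx, mul_nonneg hey.le hy]
  refine ⟨key, nonexp, ?_⟩
  refine ⟨fun _ _ => 0, fun _ _ => 0, fun _ _ => 0, fun _ _ => 1/2,
    fun _ _ => le_refl 0, fun _ _ => le_refl 0, fun _ _ => le_refl 0,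
    fun _ _ => by norm_num, ⟨1/2, by norm_num, fun _ _ => le_refl _⟩,
    fun _ _ => by norm_num, fun x y => by simpa using key x y⟩
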